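/- Let a ≥ 1, let m ≥ 1 be an integer and let t ≥ 0. Then the series ∑_{ℓ=m}^{∞} ℓ·G_m^ℓ(t) converges and ∑_{ℓ=m}^{∞} ℓ·G_m^ℓ(t) ≤ m·a·e^{a t}. -/

import Mathlib

/-- Auxiliary recursion for `G_m^ℓ`, indexed by the gap `k = ℓ - m`:
`Ggap a 0 m t = e^{-amt}` and
`Ggap a (k+1) m t = a m ∫₀ᵗ e^{-am(t-s)} Ggap a k (m+1) s ds`. -/
noncomputable def Ggap (a : ℝ) : ℕ → ℕ → ℝ → ℝ
  | 0, m, t => Real.exp (-a * (m : ℝ) * t)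
  | k + 1, m, t => a * (m : ℝ) *
      ∫ s in (0 : ℝ)..t, Real.exp (-a * (m : ℝ) * (t - s)) * Ggap a k (m + 1) s

/-- `G_m^ℓ(t)` for `m ≤ ℓ`:
`G_ℓ^ℓ(t) = e^{-aℓt}` and `G_m^ℓ(t) = am ∫₀ᵗ e^{-am(t-s)} G_{m+1}^ℓ(s) ds`. -/
noncomputable def Ghier (a : ℝ) (m ℓ : ℕ) (t : ℝ) : ℝ := Ggap a (ℓ - m) m t

lemma integral_exp_pow (a : ℝ) (ha : 0 < a) (k : ℕ) (t : ℝ) :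
    ∫ s in (0:ℝ)..t, Real.exp (-a*s) * (1 - Real.exp (-a*s))^k
      = (1 - Real.exp (-a*t))^(k+1) / (a*(k+1)) := by
  have H : ∀ s : ℝ, HasDerivAt (fun u => (1 - Real.exp (-a*u))^(k+1) / (a*(k+1)))
      (Real.exp (-a*s) * (1 - Real.exp (-a*s))^k) s := by
    intro s
    have h1 : HasDerivAt (fun u : ℝ => -a*u) (-a) s := by
      simpa using (hasDerivAt_id s).const_mul (-a)
    have h2 := h1.exp
    have h3 := (h2.const_sub 1).pow (k+1)
    have h4 := h3.div_const (a*(k+1))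
    refine h4.congr_deriv ?_
    have hk : ((k:ℝ)+1) ≠ 0 := by positivity
    rw [div_eq_iff (by positivity), Nat.add_sub_cancel]
    push_cast
    ring
  rw [intervalIntegral.integral_eq_sub_of_hasDerivAt (fun s _ => H s)
    (Continuous.intervalIntegrable (by fun_prop) 0 t)]
  simp

lemma Ggap_eq (a : ℝ) (ha : 0 < a) : ∀ (k m : ℕ) (t : ℝ),
    Ggap a k (m+1) t = ((k+m).choose k : ℝ) * Real.exp (-a*(m+1)*t) * (1 - Real.exp (-a*t))^k := by
  intro k
  induction k with
  | zero => intro m t; simp [Ggap]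
  | succ k ih =>
    intro m t
    have hrw : (fun s => Real.exp (-a * ((m:ℕ)+1 : ℕ) * (t - s)) * Ggap a k ((m+1) + 1) s)
        = fun s => (((k+(m+1)).choose k : ℝ) * Real.exp (-a*(m+1)*t)) *
            (Real.exp (-a*s) * (1 - Real.exp (-a*s))^k) := by
      funext s
      rw [ih (m+1) s]
      have key : Real.exp (-a*((m:ℝ)+1)*(t-s)) * Real.exp (-a*(((m:ℝ)+1)+1)*s)
          = Real.exp (-a*((m:ℝ)+1)*t) * Real.exp (-a*s) := by
        rw [← Real.exp_add, ← Real.exp_add]; congr 1; ring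
      push_cast
      linear_combination (((k+(m+1)).choose k : ℝ) * (1 - Real.exp (-a*s))^k) * key
    show a * ((m:ℕ)+1 : ℕ) * ∫ s in (0:ℝ)..t,
        Real.exp (-a * ((m:ℕ)+1 : ℕ) * (t - s)) * Ggap a k ((m+1) + 1) s = _
    rw [hrw, intervalIntegral.integral_const_mul, integral_exp_pow a ha k t]
    have hc : ((k+1)+m).choose (k+1) * (k+1) = (m+1) * ((k+(m+1)).choose k) := by
      have h2 := Nat.choose_succ_right_eq (k+m+1) k
      have he : k+m+1-k = m+1 := by omega
      rw [he] at h2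
      rw [show (k+1)+m = k+m+1 by omega, show k+(m+1) = k+m+1 by omega] at *
      rw [h2]; ring
    have hc' : (((k+1)+m).choose (k+1) : ℝ) * ((k:ℝ)+1) = ((m:ℝ)+1) * ((k+(m+1)).choose k) := by
      exact_mod_cast congrArg (Nat.cast : ℕ → ℝ) hc
    have hC : ((((k+1)+m).choose (k+1) : ℕ) : ℝ)
        = a*((m:ℝ)+1)*((k+(m+1)).choose k) / (a*((k:ℝ)+1)) := by
      rw [eq_div_iff (by positivity)]
      linear_combination a * hc'
    push_cast
    push_cast at hC
    rw [hC]
    field_simp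

/-- The series `∑_{ℓ=m}^∞ ℓ·G_m^ℓ(t)` converges and is bounded by `m·a·e^{at}`. -/
theorem sum_mul_Ghier_le (a : ℝ) (ha : 1 ≤ a) (m : ℕ) (hm : 1 ≤ m) (t : ℝ) (ht : 0 ≤ t) :
    Summable (fun k : ℕ => ((m + k : ℕ) : ℝ) * Ghier a m (m + k) t) ∧
      ∑' k : ℕ, ((m + k : ℕ) : ℝ) * Ghier a m (m + k) t
        ≤ (m : ℝ) * a * Real.exp (a * t) := by
  have ha0 : 0 < a := lt_of_lt_of_le one_pos ha
  obtain ⟨μ, rfl⟩ : ∃ μ, m = μ + 1 := ⟨m - 1, by omega⟩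
  set x : ℝ := 1 - Real.exp (-a*t) with hxdef
  have hexpos := Real.exp_pos (-a*t)
  have hx0 : 0 ≤ x := by
    have : Real.exp (-a*t) ≤ Real.exp 0 := Real.exp_le_exp.mpr (by nlinarith)
    simp at this; simp [hxdef]; linarith
  have hx1 : x < 1 := by
    have := Real.exp_pos (-(a*t))
    simp [hxdef]; linarith
  have hnorm : ‖x‖ < 1 := by rw [Real.norm_eq_abs, abs_of_nonneg hx0]; exact hx1
  have HS := hasSum_choose_mul_geometric_of_norm_lt_one (𝕜 := ℝ) (μ+1) hnorm
  have HS2 := HS.mul_left (((μ:ℝ)+1) * Real.exp (-a*((μ:ℝ)+1)*t))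
  have key : ∀ k : ℕ, (((μ+1) + k : ℕ) : ℝ) * Ghier a (μ+1) ((μ+1) + k) t
      = (((μ:ℝ)+1) * Real.exp (-a*((μ:ℝ)+1)*t)) * (((k+(μ+1)).choose (μ+1) : ℝ) * x^k) := by
    intro k
    have h1 : Ghier a (μ+1) ((μ+1) + k) t = Ggap a k (μ+1) t := by
      simp [Ghier, show (μ+1)+k-(μ+1) = k by omega]
    rw [h1, Ggap_eq a ha0 k μ t]
    have hc : ((μ+1)+k) * ((k+μ).choose k) = (μ+1) * ((k+(μ+1)).choose (μ+1)) := by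
      have h1' := Nat.add_one_mul_choose_eq (k+μ) k
      have h2 := Nat.choose_succ_right_eq (k+μ+1) k
      have he : k+μ+1-k = μ+1 := by omega
      rw [he] at h2
      have h3 : (k+μ+1).choose k = (k+(μ+1)).choose (μ+1) := by
        rw [show k+μ+1 = k+(μ+1) from by omega]
        rw [← Nat.choose_symm (by omega : μ+1 ≤ k+(μ+1)), show k+(μ+1)-(μ+1) = k by omega]
      rw [show (μ+1)+k = (k+μ)+1 by omega] at *
      rw [h1', h2, h3]; ring
    have hc' : (((μ+1)+k : ℕ) : ℝ) * ((k+μ).choose k : ℝ)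
        = ((μ:ℝ)+1) * ((k+(μ+1)).choose (μ+1) : ℝ) := by exact_mod_cast congrArg (Nat.cast : ℕ → ℝ) hc
    push_cast
    push_cast at hc'
    linear_combination (Real.exp (-a*((μ:ℝ)+1)*t) * x^k) * hc'
  have heq : (fun k : ℕ => (((μ+1) + k : ℕ) : ℝ) * Ghier a (μ+1) ((μ+1) + k) t)
      = fun k : ℕ => (((μ:ℝ)+1) * Real.exp (-a*((μ:ℝ)+1)*t)) * (((k+(μ+1)).choose (μ+1) : ℝ) * x^k) :=
    funext key
  rw [heq]
  refine ⟨HS2.summable, ?_⟩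
  rw [HS2.tsum_eq]
  have hval : (((μ:ℝ)+1) * Real.exp (-a*((μ:ℝ)+1)*t)) * (1 / (1-x)^((μ+1)+1))
      = ((μ:ℝ)+1) * Real.exp (a*t) := by
    have h1x : 1 - x = Real.exp (-a*t) := by simp [hxdef]
    rw [h1x, ← Real.exp_nat_mul, one_div, ← Real.exp_neg, mul_assoc, ← Real.exp_add]
    congr 1
    push_cast
    ring
  rw [hval]
  have hp := Real.exp_pos (a*t)
  have : ((μ:ℝ)+1) * Real.exp (a*t) ≤ ((μ:ℝ)+1) * (a * Real.exp (a*t)) :=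
    mul_le_mul_of_nonneg_left (le_mul_of_one_le_left hp.le ha) (by positivity)
  push_cast
  linarith
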